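/- arXiv:1612.06810 — 9 statements merged into one kernel-verified Lean document; each statement's English description precedes it below -/
import Mathlib

section
/- Let G be a group, φ an automorphism of G and g ∈ G such that φ ∘ φ = conj_g and φ(g) = g. In the semidirect product G ⋊ ℤ, where n ∈ ℤ acts on G by the automorphism φⁿ, the cyclic subgroup generated by the element (g⁻¹, 2) is a normal subgroup. -/
/-- If `φ ∘ φ = conj_g` and `φ(g) = g`, then in the semidirect product `G ⋊ ℤ`
(where `n ∈ ℤ` acts on `G` by `φⁿ`), the cyclic subgroup generated by `(g⁻¹, 2)`
is normal. -/
theorem stmt_3 {G : Type*} [Group G] (φ : MulAut G) (g : G)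
    (h1 : φ * φ = MulAut.conj g) (h2 : φ g = g) :
    (Subgroup.zpowers
      (⟨g⁻¹, Multiplicative.ofAdd 2⟩ :
        G ⋊[zpowersHom (MulAut G) φ] Multiplicative ℤ)).Normal := by
  set x : G ⋊[zpowersHom (MulAut G) φ] Multiplicative ℤ :=
    ⟨g⁻¹, Multiplicative.ofAdd 2⟩ with hx
  have fix_inv : ∀ ψ : MulAut G, ψ g = g → ψ⁻¹ g = g := by
    intro ψ h
    conv_lhs => rw [← h, MulAut.inv_apply_self]
  have hgnat : ∀ k : ℕ, (φ ^ k) g = g := by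
    intro k
    induction k with
    | zero => rfl
    | succ n ih => rw [pow_succ, MulAut.mul_apply, h2, ih]
  have hg : ∀ n : ℤ, (φ ^ n) g = g := by
    intro n
    cases n with
    | ofNat k => simpa using hgnat k
    | negSucc k => rw [zpow_negSucc]; exact fix_inv _ (hgnat (k + 1))
  have hsq : φ ^ (2 : ℤ) = MulAut.conj g := by
    rw [show (2:ℤ) = 1 + 1 by norm_num, zpow_add, zpow_one, h1]
  have key : ∀ y : G ⋊[zpowersHom (MulAut G) φ] Multiplicative ℤ,
      y * x * y⁻¹ = x := by
    rintro ⟨a, m⟩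
    ext
    · simp only [hx, SemidirectProduct.mul_left, SemidirectProduct.inv_left,
        SemidirectProduct.mul_right, SemidirectProduct.inv_right,
        zpowersHom_apply, map_inv]
      rw [hg]
      have : φ ^ Multiplicative.toAdd (m * Multiplicative.ofAdd 2) *
          (φ ^ Multiplicative.toAdd m)⁻¹ = MulAut.conj g := by
        rw [← zpow_neg, ← zpow_add, toAdd_mul, toAdd_ofAdd, ← hsq]
        ring_nf
      rw [← MulAut.mul_apply, this, MulAut.conj_apply]
      group
    · simp [hx, mul_comm]
  constructor
  intro n hn y
  obtain ⟨k, rfl⟩ := hn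
  rw [← conj_zpow, key]
  exact Subgroup.zpow_mem _ (Subgroup.mem_zpowers x) k
end

section
/- Let G be a group and for i = 1, 2 let Ḡᵢ be a group, ιᵢ : G → Ḡᵢ an injective homomorphism whose image is a normal subgroup of index 2, and xᵢ ∈ Ḡᵢ with xᵢ ∉ ιᵢ(G). Let φᵢ be the automorphism of G determined by ιᵢ(φᵢ(a)) = xᵢ·ιᵢ(a)·xᵢ⁻¹ for all a ∈ G, and let gᵢ ∈ G be the element with ιᵢ(gᵢ) = xᵢ². If there exists h ∈ G with φ₂ = φ₁ ∘ conj_h and g₂ = φ₁(h)·g₁·h, then there exists a group isomorphism α : Ḡ₁ → Ḡ₂ such that α ∘ ι₁ = ι₂. (Equivalent pairs in P(G) give isomorphic extensions of G by C₂.) -/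
/-- Equivalent pairs in `P(G)` give isomorphic extensions of `G` by `C₂`. -/
theorem stmt_5 {G : Type*} [Group G] {Gb₁ Gb₂ : Type*} [Group Gb₁] [Group Gb₂]
    (ι₁ : G →* Gb₁) (ι₂ : G →* Gb₂)
    (hinj₁ : Function.Injective ι₁) (hinj₂ : Function.Injective ι₂)
    (hn₁ : ι₁.range.Normal) (hn₂ : ι₂.range.Normal)
    (hidx₁ : ι₁.range.index = 2) (hidx₂ : ι₂.range.index = 2)
    (x₁ : Gb₁) (x₂ : Gb₂) (hx₁ : x₁ ∉ ι₁.range) (hx₂ : x₂ ∉ ι₂.range)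
    (φ₁ φ₂ : MulAut G)
    (hφ₁ : ∀ a : G, ι₁ (φ₁ a) = x₁ * ι₁ a * x₁⁻¹)
    (hφ₂ : ∀ a : G, ι₂ (φ₂ a) = x₂ * ι₂ a * x₂⁻¹)
    (g₁ g₂ : G) (hg₁ : ι₁ g₁ = x₁ ^ 2) (hg₂ : ι₂ g₂ = x₂ ^ 2)
    (heq : ∃ h : G, φ₂ = φ₁ * MulAut.conj h ∧ g₂ = φ₁ h * g₁ * h) :
    ∃ α : Gb₁ ≃* Gb₂, ∀ a : G, α (ι₁ a) = ι₂ a := by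
  classical
  obtain ⟨h, hh1, hh2⟩ := heq
  -- section of ι₁
  set s : Gb₁ → G := Function.invFun ι₁ with hs_def
  have hs : ∀ a : G, s (ι₁ a) = a := Function.leftInverse_invFun hinj₁
  have hs' : ∀ y : Gb₁, y ∈ ι₁.range → ι₁ (s y) = y := by
    rintro y ⟨a, rfl⟩; rw [hs]
  -- φ₂ in terms of φ₁
  have hφ₂' : ∀ a : G, φ₂ a = φ₁ (h * a * h⁻¹) := by
    intro a; rw [hh1]; rfl
  -- the distinguished element of Gb₂ (kept opaque)
  obtain ⟨t, ht_def⟩ : ∃ t : Gb₂, t = x₂ * (ι₂ h)⁻¹ := ⟨_, rfl⟩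
  have ht_conj : ∀ a : G, t * ι₂ a = ι₂ (φ₁ a) * t := by
    intro a
    have e1 : x₂ * ι₂ (h⁻¹ * a * h) = ι₂ (φ₂ (h⁻¹ * a * h)) * x₂ := by
      rw [hφ₂]; group
    have e2 : φ₂ (h⁻¹ * a * h) = φ₁ a := by
      rw [hφ₂']; congr 1; group
    calc t * ι₂ a = x₂ * ι₂ (h⁻¹ * a * h) * (ι₂ h)⁻¹ := by
          rw [ht_def]; simp [map_mul, map_inv]; group
      _ = ι₂ (φ₂ (h⁻¹ * a * h)) * x₂ * (ι₂ h)⁻¹ := by rw [e1]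
      _ = ι₂ (φ₁ a) * t := by rw [e2, ht_def, mul_assoc]
  have ht_sq : t * t = ι₂ g₁ := by
    have e1 : x₂ * (ι₂ h)⁻¹ = ι₂ (φ₂ h⁻¹) * x₂ := by
      rw [hφ₂, map_inv]; group
    have e2 : φ₂ h⁻¹ = φ₁ h⁻¹ := by rw [hφ₂']; congr 1; group
    calc t * t = (ι₂ (φ₂ h⁻¹) * x₂) * (x₂ * (ι₂ h)⁻¹) := by rw [ht_def, e1]
      _ = ι₂ (φ₂ h⁻¹) * x₂ ^ 2 * (ι₂ h)⁻¹ := by rw [sq]; simp [mul_assoc]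
      _ = ι₂ (φ₂ h⁻¹ * g₂ * h⁻¹) := by rw [← hg₂]; simp [map_mul, map_inv]
      _ = ι₂ g₁ := by
          congr 1
          rw [e2, hh2, map_inv]
          group
  have ht_mem : t ∉ ι₂.range := by
    intro ⟨a, ha⟩
    apply hx₂
    exact ⟨a * h, by rw [map_mul, ha, ht_def]; group⟩
  -- membership criteria
  have mem₂ : ∀ a b : Gb₂, a * b ∈ ι₂.range ↔ (a ∈ ι₂.range ↔ b ∈ ι₂.range) :=
    fun a b => Subgroup.mul_mem_iff_of_index_two hidx₂
  have mem₁ : ∀ a b : Gb₁, a * b ∈ ι₁.range ↔ (a ∈ ι₁.range ↔ b ∈ ι₁.range) :=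
    fun a b => Subgroup.mul_mem_iff_of_index_two hidx₁
  have hx₁inv : x₁⁻¹ ∉ ι₁.range := fun hc => hx₁ (by simpa using inv_mem hc)
  have coset₁ : ∀ y : Gb₁, y ∉ ι₁.range → y * x₁⁻¹ ∈ ι₁.range := by
    intro y hy
    rw [mem₁]
    exact iff_of_false hy hx₁inv
  -- the map
  set f : Gb₁ → Gb₂ := fun y =>
    if y ∈ ι₁.range then ι₂ (s y) else ι₂ (s (y * x₁⁻¹)) * t with hf_def
  have hfι : ∀ a : G, f (ι₁ a) = ι₂ a := by
    intro a
    rw [hf_def]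
    simp only [if_pos (MonoidHom.mem_range.mpr ⟨a, rfl⟩), hs]
  have hf_in : ∀ y : Gb₁, y ∈ ι₁.range → f y = ι₂ (s y) := by
    intro y hy; rw [hf_def]; simp [hy]
  have hf_out : ∀ y : Gb₁, y ∉ ι₁.range → f y = ι₂ (s (y * x₁⁻¹)) * t := by
    intro y hy; rw [hf_def]; simp [hy]
  -- multiplicativity
  have hf_mul : ∀ y z : Gb₁, f (y * z) = f y * f z := by
    intro y z
    by_cases hy : y ∈ ι₁.range <;> by_cases hz : z ∈ ι₁.range
    · have hyz : y * z ∈ ι₁.range := mul_mem hy hz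
      rw [hf_in _ hyz, hf_in _ hy, hf_in _ hz, ← map_mul]
      congr 1
      apply hinj₁
      rw [map_mul, hs' _ hyz, hs' _ hy, hs' _ hz]
    · have hyz : y * z ∉ ι₁.range := by
        rw [mem₁]; simp [hy, hz]
      rw [hf_out _ hyz, hf_in _ hy, hf_out _ hz]
      have key : s (y * z * x₁⁻¹) = s y * s (z * x₁⁻¹) := by
        apply hinj₁
        rw [map_mul, hs' _ (coset₁ _ hyz), hs' _ hy, hs' _ (coset₁ _ hz)]
        group
      rw [key, map_mul, mul_assoc]
    · have hyz : y * z ∉ ι₁.range := by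
        rw [mem₁]; simp [hy, hz]
      rw [hf_out _ hyz, hf_out _ hy, hf_in _ hz]
      have key : s (y * z * x₁⁻¹) = s (y * x₁⁻¹) * φ₁ (s z) := by
        apply hinj₁
        rw [map_mul, hs' _ (coset₁ _ hyz), hs' _ (coset₁ _ hy), hφ₁, hs' _ hz]
        group
      rw [key, map_mul, mul_assoc, ← ht_conj, ← mul_assoc]
    · have hyz : y * z ∈ ι₁.range := by
        rw [mem₁]; simp [hy, hz]
      rw [hf_in _ hyz, hf_out _ hy, hf_out _ hz]
      have key : s (y * z) = s (y * x₁⁻¹) * (φ₁ (s (z * x₁⁻¹)) * g₁) := by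
        apply hinj₁
        rw [map_mul, map_mul, hs' _ hyz, hs' _ (coset₁ _ hy), hφ₁,
          hs' _ (coset₁ _ hz), hg₁]
        group
      rw [key, map_mul, map_mul, ← ht_sq,
        ← mul_assoc (ι₂ (φ₁ (s (z * x₁⁻¹)))), ← ht_conj]
      group
  have hf_bij : Function.Bijective f := by
    constructor
    · intro y z hyz
      by_cases hy : y ∈ ι₁.range <;> by_cases hz : z ∈ ι₁.range
      · rw [hf_in _ hy, hf_in _ hz] at hyz
        have := hinj₂ hyz
        rw [← hs' _ hy, ← hs' _ hz, this]
      · rw [hf_in _ hy, hf_out _ hz] at hyz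
        exact absurd ⟨(s (z * x₁⁻¹))⁻¹ * s y, by
          rw [map_mul, map_inv, hyz]; group⟩ ht_mem
      · rw [hf_out _ hy, hf_in _ hz] at hyz
        exact absurd ⟨(s (y * x₁⁻¹))⁻¹ * s z, by
          rw [map_mul, map_inv, ← hyz]; group⟩ ht_mem
      · rw [hf_out _ hy, hf_out _ hz] at hyz
        have h2 := hinj₂ (mul_right_cancel hyz)
        have : y * x₁⁻¹ = z * x₁⁻¹ := by
          rw [← hs' _ (coset₁ _ hy), ← hs' _ (coset₁ _ hz), h2]
        exact mul_right_cancel this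
    · intro w
      by_cases hw : w ∈ ι₂.range
      · obtain ⟨a, rfl⟩ := hw
        exact ⟨ι₁ a, hfι a⟩
      · have hwt : w * t⁻¹ ∈ ι₂.range := by
          rw [mem₂]
          exact iff_of_false hw (fun hc => ht_mem (by simpa using inv_mem hc))
        obtain ⟨a, ha⟩ := hwt
        refine ⟨ι₁ a * x₁, ?_⟩
        have hmem : ι₁ a * x₁ ∉ ι₁.range := by
          rw [mem₁]
          simp [MonoidHom.mem_range.mpr ⟨a, rfl⟩, hx₁]
        rw [hf_out _ hmem]
        have e : ι₁ a * x₁ * x₁⁻¹ = ι₁ a := by group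
        rw [e, hs, ha]
        group
  have hone : f 1 = 1 := by
    have h1 : (1 : Gb₁) = ι₁ 1 := by simp
    rw [h1, hfι, map_one]
  refine ⟨MulEquiv.ofBijective
    ({ toFun := f, map_one' := hone, map_mul' := hf_mul } : Gb₁ →* Gb₂)
    hf_bij, fun a => ?_⟩
  show f (ι₁ a) = ι₂ a
  exact hfι a
end

section
/- Let G be a group and for i = 1, 2 let Ḡᵢ be a group, ιᵢ : G → Ḡᵢ an injective homomorphism whose image is a normal subgroup of index 2, and xᵢ ∈ Ḡᵢ with xᵢ ∉ ιᵢ(G). Let φᵢ be the automorphism of G determined by ιᵢ(φᵢ(a)) = xᵢ·ιᵢ(a)·xᵢ⁻¹ for all a ∈ G, and let gᵢ ∈ G be the element with ιᵢ(gᵢ) = xᵢ². If there exists a group isomorphism α : Ḡ₁ → Ḡ₂ with α ∘ ι₁ = ι₂, then there exists h ∈ G with φ₂ = φ₁ ∘ conj_h and g₂ = φ₁(h)·g₁·h. (Isomorphic extensions of G by C₂ give equivalent pairs in P(G).) -/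
/-- Isomorphic extensions of `G` by `C₂` give equivalent pairs in `P(G)`. -/
theorem stmt_6 {G : Type*} [Group G] {Gb₁ Gb₂ : Type*} [Group Gb₁] [Group Gb₂]
    (ι₁ : G →* Gb₁) (ι₂ : G →* Gb₂)
    (hinj₁ : Function.Injective ι₁) (hinj₂ : Function.Injective ι₂)
    (hn₁ : ι₁.range.Normal) (hn₂ : ι₂.range.Normal)
    (hidx₁ : ι₁.range.index = 2) (hidx₂ : ι₂.range.index = 2)
    (x₁ : Gb₁) (x₂ : Gb₂) (hx₁ : x₁ ∉ ι₁.range) (hx₂ : x₂ ∉ ι₂.range)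
    (φ₁ φ₂ : MulAut G)
    (hφ₁ : ∀ a : G, ι₁ (φ₁ a) = x₁ * ι₁ a * x₁⁻¹)
    (hφ₂ : ∀ a : G, ι₂ (φ₂ a) = x₂ * ι₂ a * x₂⁻¹)
    (g₁ g₂ : G) (hg₁ : ι₁ g₁ = x₁ ^ 2) (hg₂ : ι₂ g₂ = x₂ ^ 2)
    (hiso : ∃ α : Gb₁ ≃* Gb₂, ∀ a : G, α (ι₁ a) = ι₂ a) :
    ∃ h : G, φ₂ = φ₁ * MulAut.conj h ∧ g₂ = φ₁ h * g₁ * h := by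
  obtain ⟨α, hα⟩ := hiso
  have hax₁ : (α x₁) ∉ ι₂.range := by
    rintro ⟨a, ha⟩
    exact hx₁ ⟨a, α.injective (by rw [hα, ha])⟩
  have hmem : (α x₁)⁻¹ * x₂ ∈ ι₂.range := by
    rw [Subgroup.mul_mem_iff_of_index_two hidx₂]
    simp [hax₁, hx₂]
  obtain ⟨h, hh⟩ := hmem
  have hx2 : x₂ = α x₁ * ι₂ h := by rw [hh]; group
  refine ⟨h, ?_, ?_⟩
  · ext b
    apply hinj₂
    rw [MulAut.mul_apply, MulAut.conj_apply, hφ₂, ← hα (φ₁ (h * b * h⁻¹)), hφ₁, hx2]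
    simp only [map_mul, map_inv, hα]
    group
  · apply hinj₂
    rw [hg₂, hx2, map_mul, map_mul, ← hα (φ₁ h), hφ₁, ← hα g₁, hg₁, map_mul, map_mul,
      map_inv, map_pow, hα, sq]
    group
end

section
/- Let Ḡ be a group, G a normal subgroup of Ḡ of index 2, x ∈ Ḡ with x ∉ G, and let φ_x denote the automorphism of G given by conjugation by x. Then there exists y ∈ Ḡ with y ∉ G and y² = 1 (i.e. the extension of G by C₂ splits) if and only if there exists h ∈ G with φ_x(h)·x²·h = 1; equivalently, if and only if the pair (φ_x, x²) is equivalent in P(G) to a pair whose second coordinate is the identity element. -/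
/-- The extension `Gb` of an index-2 normal subgroup `G` splits (there is
`y ∉ G` with `y² = 1`) if and only if there exists `h ∈ G` with
`φ_x(h) · x² · h = 1`, i.e. `(φ_x, x²)` is equivalent in `P(G)` to a pair whose
second coordinate is the identity. -/
theorem stmt_7 {Gb : Type*} [Group Gb] (G : Subgroup Gb) [G.Normal]
    (hidx : G.index = 2) (x : Gb) (hx : x ∉ G)
    (φx : MulAut G)
    (hφx : ∀ a : G, ((φx a : G) : Gb) = x * a * x⁻¹) :
    (∃ y : Gb, y ∉ G ∧ y ^ 2 = 1) ↔
      ∃ h : G, ((φx h : G) : Gb) * x ^ 2 * (h : Gb) = 1 := by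
  constructor
  · rintro ⟨y, hyG, hy2⟩
    have hmem : x⁻¹ * y ∈ G := by
      rw [Subgroup.mul_mem_iff_of_index_two hidx]
      simp only [inv_mem_iff]
      tauto
    refine ⟨⟨x⁻¹ * y, hmem⟩, ?_⟩
    rw [hφx]
    have : y * y = 1 := by rw [← sq]; exact hy2
    simp only [Subgroup.coe_mk]
    calc x * (x⁻¹ * y) * x⁻¹ * x ^ 2 * (x⁻¹ * y) = y * y := by group
      _ = 1 := this
  · rintro ⟨h, hh⟩
    refine ⟨x * h, ?_, ?_⟩
    · intro hmem
      exact hx (by simpa using mul_mem hmem (inv_mem h.2))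
    · have := hφx h
      rw [this] at hh
      calc (x * (h : Gb)) ^ 2 = x * h * x⁻¹ * x ^ 2 * h := by rw [pow_two, pow_two]; group
        _ = 1 := hh
end

section
/- Let Ḡ be a group, G a normal subgroup of Ḡ of index 2, x ∈ Ḡ with x ∉ G, and let φ_x denote the automorphism of G given by conjugation by x. Then there exists y ∈ Ḡ with y ∉ G, y² = 1 and y·a = a·y for all a ∈ G (i.e. Ḡ is the internal direct product of G with a subgroup of order 2) if and only if there exists h ∈ G with φ_x ∘ conj_h = id_G and φ_x(h)·x²·h = 1; equivalently, if and only if the pair (φ_x, x²) is equivalent in P(G) to the pair (id_G, 1). -/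
/-- The extension `Gb` of an index-2 normal subgroup `G` is a direct product of
`G` with a subgroup of order 2 (there is `y ∉ G` with `y² = 1` commuting with all
of `G`) if and only if there exists `h ∈ G` with `φ_x ∘ conj_h = id` and
`φ_x(h) · x² · h = 1`, i.e. `(φ_x, x²)` is equivalent in `P(G)` to `(id, 1)`. -/
theorem stmt_8 {Gb : Type*} [Group Gb] (G : Subgroup Gb) [G.Normal]
    (hidx : G.index = 2) (x : Gb) (hx : x ∉ G)
    (φx : MulAut G)
    (hφx : ∀ a : G, ((φx a : G) : Gb) = x * a * x⁻¹) :
    (∃ y : Gb, y ∉ G ∧ y ^ 2 = 1 ∧ ∀ a ∈ G, y * a = a * y) ↔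
      ∃ h : G, φx * MulAut.conj h = 1 ∧
        ((φx h : G) : Gb) * x ^ 2 * (h : Gb) = 1 := by
  constructor
  · rintro ⟨y, hyG, hy2, hyc⟩
    have hxy : x⁻¹ * y ∈ G := by
      rw [Subgroup.mul_mem_iff_of_index_two hidx]
      exact iff_of_false (fun h => hx (G.inv_mem_iff.mp h)) hyG
    refine ⟨⟨x⁻¹ * y, hxy⟩, ?_, ?_⟩
    · ext a
      have := hφx (⟨x⁻¹ * y, hxy⟩ * a * ⟨x⁻¹ * y, hxy⟩⁻¹)
      have hcomm : y * (a : Gb) = a * y := hyc a a.2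
      simp only [MulAut.mul_apply, MulAut.conj_apply, MulAut.one_apply]
      rw [this]
      push_cast
      calc x * (x⁻¹ * y * a * (x⁻¹ * y)⁻¹) * x⁻¹
          = y * a * y⁻¹ := by group
        _ = a := by rw [hcomm]; group
    · rw [hφx]
      push_cast
      have : x * (x⁻¹ * y) * x⁻¹ * x ^ 2 * (x⁻¹ * y) = y * y := by group
      rw [this, ← pow_two, hy2]
  · rintro ⟨h, h1, h2⟩
    refine ⟨x * h, ?_, ?_, ?_⟩
    · intro hm
      exact hx (by simpa using mul_mem hm (G.inv_mem h.2))
    · have hc : ((φx h : G) : Gb) = x * h * x⁻¹ := hφx h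
      rw [hc] at h2
      calc (x * (h : Gb)) ^ 2 = x * h * x⁻¹ * x ^ 2 * h := by rw [pow_two]; group
        _ = 1 := h2
    · intro a ha
      have := MulEquiv.ext_iff.mp h1 ⟨a, ha⟩
      simp only [MulAut.mul_apply, MulAut.conj_apply, MulAut.one_apply] at this
      have hc := hφx (h * ⟨a, ha⟩ * h⁻¹)
      rw [this] at hc
      push_cast at hc
      replace hc := hc.symm
      have : x * ((h : Gb) * a * (h : Gb)⁻¹) * x⁻¹ * (x * h) = a * (x * h) := by
        rw [hc]
      calc x * (h : Gb) * a = x * ((h : Gb) * a * (h : Gb)⁻¹) * x⁻¹ * (x * h) := by group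
        _ = a * (x * h) := this
end

section
/- Let Ḡ be a group and G a normal subgroup of Ḡ of index 2. Assume that the center of G is trivial and that x ∈ Ḡ \ G is such that conjugation by x restricted to G is an inner automorphism of G. Then there exists y ∈ Ḡ with y ∉ G, y² = 1, and y·a = a·y for every a ∈ G; in particular Ḡ is the internal direct product of G with the order-2 subgroup generated by y. -/
lemma stmt_9_aux {Gb : Type*} [Group Gb] (G : Subgroup Gb)
    (hcenter : Subgroup.center ↥G = ⊥) (y : Gb) (hsq : y * y ∈ G)
    (hcomm : ∀ a ∈ G, y * a = a * y) : y * y = 1 := by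
  have hcen : (⟨y * y, hsq⟩ : G) ∈ Subgroup.center ↥G := by
    rw [Subgroup.mem_center_iff]
    intro g
    apply Subtype.ext
    simp only [Subgroup.coe_mul]
    have c := hcomm g g.2
    calc (g : Gb) * (y * y) = ((g : Gb) * y) * y := by rw [mul_assoc]
      _ = (y * g) * y := by rw [c]
      _ = y * (g * y) := by rw [mul_assoc]
      _ = y * (y * g) := by rw [c]
      _ = (y * y) * g := by rw [mul_assoc]
  rw [hcenter, Subgroup.mem_bot] at hcen
  exact congrArg Subtype.val hcen

/-- If `G` is an index-2 normal subgroup of `Gb` with trivial center and some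
`x ∈ Gb \ G` conjugates `G` by an inner automorphism, then there is `y ∈ Gb \ G`
with `y² = 1` commuting with every element of `G`. -/
theorem stmt_9 {Gb : Type*} [Group Gb] (G : Subgroup Gb) [G.Normal]
    (hidx : G.index = 2)
    (hcenter : Subgroup.center ↥G = ⊥)
    (x : Gb) (hx : x ∉ G)
    (hinner : ∃ h ∈ G, ∀ a ∈ G, x * a * x⁻¹ = h * a * h⁻¹) :
    ∃ y : Gb, y ∉ G ∧ y ^ 2 = 1 ∧ ∀ a ∈ G, y * a = a * y := by
  obtain ⟨h, hh, hconj⟩ := hinner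
  have hyG : h⁻¹ * x ∉ G := fun hmem =>
    hx (by simpa using G.mul_mem hh hmem)
  have hcomm : ∀ a ∈ G, (h⁻¹ * x) * a = a * (h⁻¹ * x) := by
    intro a ha
    have hc := hconj a ha
    calc h⁻¹ * x * a = h⁻¹ * (x * a * x⁻¹) * x := by group
      _ = h⁻¹ * (h * a * h⁻¹) * x := by rw [hc]
      _ = a * (h⁻¹ * x) := by group
  refine ⟨h⁻¹ * x, hyG, ?_, hcomm⟩
  have hsq : (h⁻¹ * x) * (h⁻¹ * x) ∈ G := by
    rw [Subgroup.mul_mem_iff_of_index_two hidx]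
  rw [pow_two]
  exact stmt_9_aux G hcenter _ hsq hcomm
end

section
/- Let G be a group with trivial center such that the outer automorphism group Out(G) = Aut(G)/Inn(G) contains no element of order 2, i.e. every automorphism ψ of G with ψ ∘ ψ inner is itself inner. Then for every group Ḡ containing G as a normal subgroup of index 2, there exists y ∈ Ḡ with y ∉ G, y² = 1, and y·a = a·y for every a ∈ G. In particular, every extension of G by the cyclic group of order 2 is a direct product G × C₂. -/
/-- If `G` has trivial center and `Out(G)` has no involutions (every automorphism
whose square is inner is itself inner), then every extension of `G` by `C₂` is a
direct product: any group containing `G` as an index-2 normal subgroup contains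
an element `y ∉ G` with `y² = 1` centralizing `G`. -/
theorem stmt_10 {G : Type*} [Group G]
    (hcenter : Subgroup.center G = ⊥)
    (hout : ∀ ψ : MulAut G, (∃ h : G, ψ * ψ = MulAut.conj h) →
      ∃ h : G, ψ = MulAut.conj h) :
    ∀ (Gb : Type*) [Group Gb] (ι : G →* Gb),
      Function.Injective ι → ι.range.Normal → ι.range.index = 2 →
      ∃ y : Gb, y ∉ ι.range ∧ y ^ 2 = 1 ∧ ∀ a : G, y * ι a = ι a * y := by
  intro Gb _ ι hinj hnorm hidx
  -- squares lie in the range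
  have hsq : ∀ g : Gb, g ^ 2 ∈ ι.range := by
    intro g
    have hcard : Nat.card (Gb ⧸ ι.range) = 2 := hidx
    have h1 : ((g : Gb ⧸ ι.range)) ^ 2 = 1 := by
      rw [← hcard]; exact pow_card_eq_one'
    have : ((g ^ 2 : Gb) : Gb ⧸ ι.range) = 1 := by
      rw [← h1]; rfl
    exact (QuotientGroup.eq_one_iff _).mp this
  -- pick x outside the range
  have hne : ι.range ≠ ⊤ := by
    intro h
    rw [h] at hidx
    simp [Subgroup.index_top] at hidx
  obtain ⟨x, hx⟩ : ∃ x : Gb, x ∉ ι.range := by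
    by_contra h
    push_neg at h
    exact hne ((Subgroup.eq_top_iff' ι.range).mpr h)
  -- the conjugation automorphism transported to G
  let e : G ≃* ι.range := MonoidHom.ofInjective hinj
  have he : ∀ a : G, (e a : Gb) = ι a := fun a => MonoidHom.ofInjective_apply hinj
  let ψ : MulAut G := (e.trans (MulAut.conjNormal x)).trans e.symm
  have hψ : ∀ a : G, ι (ψ a) = x * ι a * x⁻¹ := by
    intro a
    have : e (ψ a) = MulAut.conjNormal x (e a) := by
      simp [ψ]
    have h2 : (e (ψ a) : Gb) = ((MulAut.conjNormal x (e a) : ι.range) : Gb) := by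
      rw [this]
    rw [he] at h2
    rw [h2, MulAut.conjNormal_apply, he]
  -- ψ² is inner
  obtain ⟨h, hh⟩ := hsq x
  have hinner : ψ * ψ = MulAut.conj h := by
    ext a
    apply hinj
    have : ι ((ψ * ψ) a) = x ^ 2 * ι a * (x ^ 2)⁻¹ := by
      show ι (ψ (ψ a)) = _
      rw [hψ, hψ]
      rw [pow_two, mul_inv_rev]
      group
    rw [this, ← hh]
    simp [MulAut.conj_apply, mul_assoc]
  obtain ⟨h₀, hh₀⟩ := hout ψ ⟨h, hinner⟩
  refine ⟨(ι h₀)⁻¹ * x, ?_, ?_, ?_⟩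
  · intro hy
    have hxmem : x ∈ ι.range := by
      have := Subgroup.mul_mem ι.range (⟨h₀, rfl⟩ : ι h₀ ∈ ι.range) hy
      simpa [← mul_assoc] using this
    exact hx hxmem
  · -- commutation first
    have hcomm : ∀ a : G, ((ι h₀)⁻¹ * x) * ι a = ι a * ((ι h₀)⁻¹ * x) := by
      intro a
      have h1 : x * ι a = ι (ψ a) * x := by rw [hψ]; group
      have h2 : ψ a = h₀ * a * h₀⁻¹ := by rw [hh₀]; rfl
      rw [mul_assoc, h1, h2]
      simp only [map_mul, map_inv]
      group
    -- now y² centralizes everything and is in the range, hence in the trivial center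
    obtain ⟨z, hz⟩ := hsq ((ι h₀)⁻¹ * x)
    have hzc : z ∈ Subgroup.center G := by
      rw [Subgroup.mem_center_iff]
      intro a
      apply hinj
      have : ι z * ι a = ι a * ι z := by
        rw [hz]
        have := hcomm a
        calc ((ι h₀)⁻¹ * x) ^ 2 * ι a
            = ((ι h₀)⁻¹ * x) * (((ι h₀)⁻¹ * x) * ι a) := by rw [pow_two]; group
          _ = ((ι h₀)⁻¹ * x) * (ι a * ((ι h₀)⁻¹ * x)) := by rw [this]
          _ = (((ι h₀)⁻¹ * x) * ι a) * ((ι h₀)⁻¹ * x) := by group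
          _ = ι a * ((ι h₀)⁻¹ * x) ^ 2 := by rw [this, pow_two]; group
      simpa [map_mul] using this.symm
    rw [hcenter, Subgroup.mem_bot] at hzc
    rw [← hz, hzc, map_one]
  · intro a
    have h1 : x * ι a = ι (ψ a) * x := by rw [hψ]; group
    have h2 : ψ a = h₀ * a * h₀⁻¹ := by rw [hh₀]; rfl
    rw [mul_assoc, h1, h2]
    simp only [map_mul, map_inv]
    group
end

section
/- Let G be a group with trivial center and suppose that Inn(G) has a group complement in Aut(G), i.e. there is a subgroup H ≤ Aut(G) with H ∩ Inn(G) = {1} and such that every automorphism of G can be written as a product of an element of H and an inner automorphism. Then for every group Ḡ containing G as a normal subgroup of index 2, there exists y ∈ Ḡ with y ∉ G and y² = 1. In particular, every extension of G by the cyclic group of order 2 splits. -/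
/-- If `G` has trivial center and `Inn(G)` has a group complement in `Aut(G)`,
then every extension of `G` by `C₂` splits: any group containing `G` as an
index-2 normal subgroup contains an element `y ∉ G` with `y² = 1`. -/
theorem stmt_11 {G : Type*} [Group G]
    (hcenter : Subgroup.center G = ⊥)
    (H : Subgroup (MulAut G))
    (hinter : H ⊓ (MulAut.conj : G →* MulAut G).range = ⊥)
    (hcompl : ∀ ψ : MulAut G, ∃ h ∈ H, ∃ g : G, ψ = h * MulAut.conj g) :
    ∀ (Gb : Type*) [Group Gb] (ι : G →* Gb),
      Function.Injective ι → ι.range.Normal → ι.range.index = 2 →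
      ∃ y : Gb, y ∉ ι.range ∧ y ^ 2 = 1 := by
  intro Gb _ ι hinj hnorm hidx
  haveI := hnorm
  -- pick x ∉ range
  have hne : ι.range ≠ ⊤ := by
    intro htop
    rw [htop, Subgroup.index_top] at hidx
    omega
  obtain ⟨x, hx⟩ : ∃ x : Gb, x ∉ ι.range := by
    by_contra hc
    push_neg at hc
    exact hne ((Subgroup.eq_top_iff' _).2 hc)
  set e : G ≃* ι.range := MonoidHom.ofInjective hinj with he
  -- conjugation automorphisms transported to G
  set Ψ : Gb → MulAut G := fun t => (e.trans (MulAut.conjNormal t)).trans e.symm with hΨ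
  have key : ∀ (t : Gb) (a : G), ι (Ψ t a) = t * ι a * t⁻¹ := by
    intro t a
    have h1 : e (Ψ t a) = MulAut.conjNormal t (e a) := by
      simp [hΨ]
    have h2 : (e (Ψ t a) : Gb) = ι (Ψ t a) := by
      rw [he]; exact MonoidHom.ofInjective_apply hinj
    have h3 : (e a : Gb) = ι a := by
      rw [he]; exact MonoidHom.ofInjective_apply hinj
    rw [← h2, h1, MulAut.conjNormal_apply, h3]
  obtain ⟨h, hH, g, hg⟩ := hcompl (Ψ x)
  refine ⟨x * (ι g)⁻¹, ?_, ?_⟩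
  · intro hy
    apply hx
    have : x * (ι g)⁻¹ * ι g ∈ ι.range := ι.range.mul_mem hy ⟨g, rfl⟩
    simpa using this
  · set y : Gb := x * (ι g)⁻¹ with hyd
    have key2 : ∀ a : G, ι (h a) = y * ι a * y⁻¹ := by
      intro a
      have : y * ι a * y⁻¹ = x * ι (g⁻¹ * a * g) * x⁻¹ := by
        simp [hyd, map_mul, map_inv, mul_assoc]
      have h4 : (h * MulAut.conj g) (g⁻¹ * a * g) = h a := by
        have : MulAut.conj g (g⁻¹ * a * g) = a := by
          rw [MulAut.conj_apply]; group
        show h (MulAut.conj g (g⁻¹ * a * g)) = h a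
        rw [this]
      rw [this, ← key x (g⁻¹ * a * g), hg, h4]
    have hy2 : y ^ 2 ∈ ι.range := by
      rw [← hidx]
      exact Subgroup.pow_index_mem ι.range y
    obtain ⟨z, hz⟩ := hy2
    have key3 : h * h = MulAut.conj z := by
      apply MulEquiv.ext
      intro a
      apply hinj
      show ι (h (h a)) = ι (MulAut.conj z a)
      rw [key2, key2, MulAut.conj_apply, map_mul, map_mul, map_inv, hz, pow_two]
      group
    have hmem : h * h ∈ H ⊓ (MulAut.conj : G →* MulAut G).range :=
      ⟨H.mul_mem hH hH, ⟨z, key3.symm⟩⟩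
    rw [hinter] at hmem
    have hc1 : MulAut.conj z = 1 := by rw [← key3, hmem]
    have hzc : z ∈ Subgroup.center G := by
      rw [Subgroup.mem_center_iff]
      intro a
      have : MulAut.conj z a = a := by rw [hc1]; rfl
      rw [MulAut.conj_apply] at this
      calc a * z = z * a * z⁻¹ * z := by rw [this]
        _ = z * a := by group
    rw [hcenter, Subgroup.mem_bot] at hzc
    rw [← hz, hzc, map_one]
end

section
/- Let n ≥ 1 and let G be a subgroup of index 2 of the dihedral group D_n of order 2n. Then there exists x ∈ D_n with x ∉ G and x² = 1; in particular D_n is never a non-split extension of a subgroup by the cyclic group of order 2. (Consequently, no dihedral group is the full automorphism group of a pseudoreal Riemann surface.) -/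
/-- For `n ≥ 1`, any index-2 subgroup `G` of the dihedral group `D_n` of order
`2n` admits an element `x ∉ G` with `x² = 1`; so `D_n` is never a non-split
extension by `C₂`. -/
theorem stmt_15 (n : ℕ) (hn : 1 ≤ n) (G : Subgroup (DihedralGroup n))
    (hidx : G.index = 2) :
    ∃ x : DihedralGroup n, x ∉ G ∧ x ^ 2 = 1 := by
  by_cases h : ∀ i : ZMod n, DihedralGroup.sr i ∈ G
  · exfalso
    have htop : G = ⊤ := by
      rw [Subgroup.eq_top_iff']
      intro x
      cases x with
      | r i =>
        have : DihedralGroup.sr 0 * DihedralGroup.sr i ∈ G := G.mul_mem (h 0) (h i)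
        rwa [DihedralGroup.sr_mul_sr, sub_zero] at this
      | sr i => exact h i
    rw [htop, Subgroup.index_top] at hidx
    omega
  · push_neg at h
    obtain ⟨i, hi⟩ := h
    exact ⟨DihedralGroup.sr i, hi, by rw [sq, DihedralGroup.sr_mul_self]⟩
end
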